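/- Let L be a random variable satisfying exp(-Δ·S/2) ≤ L ≤ exp(-Δ·I/2) almost surely, for real constants I ≤ S and Δ > 0. Then for any random variable G ∈ L², |E[(L/E[L])·G] - E[G]| ≤ (1/2)(exp(Δ(S-I)/2) - 1)·(E[G²])^{1/2}. -/

import Mathlib

open MeasureTheory

theorem stmt_7 {Ω : Type*} [MeasurableSpace Ω] (P : Measure Ω) [IsProbabilityMeasure P]
    (L G : Ω → ℝ) (hLmeas : Measurable L) (hGmeas : Measurable G)
    (I S Δ : ℝ) (hIS : I ≤ S) (hΔ : 0 < Δ)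
    (hL : ∀ᵐ ω ∂P, L ω ∈ Set.Icc (Real.exp (-Δ * S / 2)) (Real.exp (-Δ * I / 2)))
    (hG2 : Integrable (fun ω => (G ω) ^ 2) P) (hGint : Integrable G P) :
    |(∫ ω, (L ω / ∫ ω', L ω' ∂P) * G ω ∂P) - ∫ ω, G ω ∂P| ≤
      (1 / 2) * (Real.exp (Δ * (S - I) / 2) - 1) * (∫ ω, (G ω) ^ 2 ∂P) ^ ((1 : ℝ) / 2) := by
  set a := Real.exp (-Δ * S / 2) with ha_def
  set b := Real.exp (-Δ * I / 2) with hb_def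
  have ha : 0 < a := Real.exp_pos _
  have hb : 0 < b := Real.exp_pos _
  have hab : a ≤ b := by
    apply Real.exp_le_exp.2
    nlinarith [hΔ.le]
  have hba : b / a = Real.exp (Δ * (S - I) / 2) := by
    rw [ha_def, hb_def, ← Real.exp_sub]
    ring_nf
  have hLint : Integrable L P := by
    refine memLp_one_iff_integrable.1 (MemLp.of_bound hLmeas.aestronglyMeasurable b ?_)
    filter_upwards [hL] with ω ⟨h1, h2⟩
    rw [Real.norm_eq_abs, abs_le]
    constructor <;> linarith [ha.le.trans h1]
  set μ := ∫ ω', L ω' ∂P with hμ_def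
  have hμa : a ≤ μ := by
    have := integral_mono_ae (integrable_const a) hLint (by filter_upwards [hL] with ω h using h.1)
    simpa using this
  have hμb : μ ≤ b := by
    have := integral_mono_ae hLint (integrable_const b) (by filter_upwards [hL] with ω h using h.2)
    simpa using this
  have hμ : 0 < μ := lt_of_lt_of_le ha hμa
  set f : Ω → ℝ := fun ω => L ω / μ - 1 with hf_def
  have hfmeas : Measurable f := (hLmeas.div_const μ).sub measurable_const
  have hfbd : ∀ᵐ ω ∂P, a / μ - 1 ≤ f ω ∧ f ω ≤ b / μ - 1 := by
    filter_upwards [hL] with ω ⟨h1, h2⟩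
    exact ⟨sub_le_sub_right (div_le_div_of_nonneg_right h1 hμ.le) 1,
           sub_le_sub_right (div_le_div_of_nonneg_right h2 hμ.le) 1⟩
  have hfC : ∀ᵐ ω ∂P, ‖f ω‖ ≤ max (1 - a/μ) (b/μ - 1) := by
    filter_upwards [hfbd] with ω ⟨h1, h2⟩
    rw [Real.norm_eq_abs, abs_le]
    constructor
    · linarith [le_max_left (1 - a/μ) (b/μ - 1)]
    · linarith [le_max_right (1 - a/μ) (b/μ - 1)]
  have hfmem2 : MemLp f 2 P := MemLp.of_bound hfmeas.aestronglyMeasurable _ hfC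
  have hfint : Integrable f P :=
    memLp_one_iff_integrable.1 (hfmem2.mono_exponent (by norm_num))
  have hf2int : Integrable (fun ω => f ω ^ 2) P := hfmem2.integrable_sq
  have hfzero : ∫ ω, f ω ∂P = 0 := by
    rw [hf_def]
    rw [integral_sub (hLint.div_const μ) (integrable_const 1)]
    simp [integral_div, ← hμ_def, div_self hμ.ne']
  have hvar : ∫ ω, f ω ^ 2 ∂P ≤ (1 - a/μ) * (b/μ - 1) := by
    have key : ∫ ω, f ω ^ 2 ∂P ≤
        ∫ ω, ((a/μ - 1 + (b/μ - 1)) * f ω - (a/μ - 1) * (b/μ - 1)) ∂P := by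
      apply integral_mono_ae hf2int ((hfint.const_mul _).sub (integrable_const _))
      filter_upwards [hfbd] with ω ⟨h1, h2⟩
      simp only [Pi.sub_apply]
      nlinarith [mul_nonneg (sub_nonneg.2 h1) (sub_nonneg.2 h2)]
    rw [integral_sub (hfint.const_mul _) (integrable_const _), integral_const_mul, hfzero] at key
    simp only [mul_zero, zero_sub, integral_const, measure_univ, probReal_univ, ENNReal.toReal_one, smul_eq_mul,
      one_mul] at key
    nlinarith [key]
  set ℓ := Real.exp (Δ * (S - I) / 2) - 1 with hℓ_def
  have hℓ0 : 0 ≤ ℓ := by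
    rw [hℓ_def, ← hba, sub_nonneg, le_div_iff₀ ha]
    linarith
  have hvar2 : ∫ ω, f ω ^ 2 ∂P ≤ (ℓ / 2) ^ 2 := by
    have h2 : b/μ - a/μ ≤ ℓ := by
      rw [hℓ_def, ← hba, div_sub_div_same, div_sub_one (ne_of_gt ha), div_le_div_iff₀ hμ ha]
      nlinarith [mul_le_mul_of_nonneg_left hμa (sub_nonneg.2 hab)]
    have h3 : 0 ≤ b/μ - a/μ := by
      rw [sub_nonneg]
      exact div_le_div_of_nonneg_right hab hμ.le
    nlinarith [mul_le_mul h2 h2 h3 hℓ0, sq_nonneg ((1 - a/μ) - (b/μ - 1)), hvar]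
  have hLGint : Integrable (fun ω => (L ω / μ) * G ω) P := by
    apply Integrable.bdd_mul (c := b / μ) hGint (hLmeas.div_const μ).aestronglyMeasurable
    filter_upwards [hL] with ω ⟨h1, h2⟩
    rw [Real.norm_eq_abs, abs_of_nonneg (div_nonneg (ha.le.trans h1) hμ.le)]
    exact div_le_div_of_nonneg_right h2 hμ.le
  have hfGint : Integrable (fun ω => f ω * G ω) P :=
    Integrable.bdd_mul hGint hfmeas.aestronglyMeasurable hfC
  have hLHS : (∫ ω, (L ω / μ) * G ω ∂P) - ∫ ω, G ω ∂P = ∫ ω, f ω * G ω ∂P := by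
    rw [← integral_sub hLGint hGint]
    congr 1; ext ω; rw [hf_def]; ring
  rw [hLHS]
  have hGmem2 : MemLp G 2 P := (memLp_two_iff_integrable_sq hGmeas.aestronglyMeasurable).2 hG2
  have h2conj : Real.HolderConjugate 2 2 := ⟨by norm_num, by norm_num, by norm_num⟩
  have hCS : ∫ ω, |f ω| * |G ω| ∂P ≤
      (∫ ω, |f ω| ^ (2:ℝ) ∂P) ^ ((1:ℝ)/2) * (∫ ω, |G ω| ^ (2:ℝ) ∂P) ^ ((1:ℝ)/2) := by
    have hf2 : MemLp (fun ω => |f ω|) (ENNReal.ofReal 2) P := by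
      simpa [Real.norm_eq_abs, ENNReal.ofReal_ofNat] using hfmem2.norm
    have hg2 : MemLp (fun ω => |G ω|) (ENNReal.ofReal 2) P := by
      simpa [Real.norm_eq_abs, ENNReal.ofReal_ofNat] using hGmem2.norm
    exact integral_mul_le_Lp_mul_Lq_of_nonneg h2conj
      (Filter.Eventually.of_forall fun ω => abs_nonneg (f ω))
      (Filter.Eventually.of_forall fun ω => abs_nonneg (G ω)) hf2 hg2
  have habsf : (∫ ω, |f ω| ^ (2:ℝ) ∂P) = ∫ ω, f ω ^ 2 ∂P := by
    congr 1; ext ω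
    rw [show (2:ℝ) = ((2:ℕ):ℝ) by norm_num, Real.rpow_natCast, sq_abs]
  have habsg : (∫ ω, |G ω| ^ (2:ℝ) ∂P) = ∫ ω, G ω ^ 2 ∂P := by
    congr 1; ext ω
    rw [show (2:ℝ) = ((2:ℕ):ℝ) by norm_num, Real.rpow_natCast, sq_abs]
  rw [habsf, habsg] at hCS
  have hstep1 : |∫ ω, f ω * G ω ∂P| ≤ ∫ ω, |f ω| * |G ω| ∂P := by
    calc |∫ ω, f ω * G ω ∂P| = ‖∫ ω, f ω * G ω ∂P‖ := (Real.norm_eq_abs _).symm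
    _ ≤ ∫ ω, ‖f ω * G ω‖ ∂P := norm_integral_le_integral_norm _
    _ = ∫ ω, |f ω| * |G ω| ∂P := by simp [Real.norm_eq_abs, abs_mul]
  have hfpow : (∫ ω, f ω ^ 2 ∂P) ^ ((1:ℝ)/2) ≤ ℓ / 2 := by
    have h1 : (∫ ω, f ω ^ 2 ∂P) ^ ((1:ℝ)/2) ≤ ((ℓ/2)^2) ^ ((1:ℝ)/2) :=
      Real.rpow_le_rpow (integral_nonneg fun ω => sq_nonneg _) hvar2 (by norm_num)
    have h2 : ((ℓ/2)^2 : ℝ) ^ ((1:ℝ)/2) = ℓ/2 := by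
      rw [show ((ℓ/2)^2 : ℝ) = (ℓ/2)^((2:ℕ):ℝ) by rw [Real.rpow_natCast],
        ← Real.rpow_mul (by positivity)]
      norm_num
    linarith
  have hGnn : (0:ℝ) ≤ (∫ ω, G ω ^ 2 ∂P) ^ ((1:ℝ)/2) :=
    Real.rpow_nonneg (integral_nonneg fun ω => sq_nonneg _) _
  calc |∫ ω, f ω * G ω ∂P| ≤ (∫ ω, f ω ^ 2 ∂P) ^ ((1:ℝ)/2) * (∫ ω, G ω ^ 2 ∂P) ^ ((1:ℝ)/2) :=
        hstep1.trans hCS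
    _ ≤ (ℓ/2) * (∫ ω, G ω ^ 2 ∂P) ^ ((1:ℝ)/2) := mul_le_mul_of_nonneg_right hfpow hGnn
    _ = (1/2) * ℓ * (∫ ω, G ω ^ 2 ∂P) ^ ((1:ℝ)/2) := by ring
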